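/- Let D be a division ring containing a field K in its center. The diagonal subalgebra Δ²(n,D) = {(X,X) : X ∈ M_n(D)} is a maximal K-subalgebra of M_n(D) × M_n(D). -/

import Mathlib

/-- For a division ring `D` with a field `K` in its center, the diagonal subalgebra
`Δ²(n,D) = {(X,X)}` is a maximal `K`-subalgebra of `Mₙ(D) × Mₙ(D)`. -/
theorem stmt8 {K D : Type*} [Field K] [DivisionRing D] [Algebra K D] (n : ℕ) (hn : 0 < n) :
    IsCoatom ((AlgHom.prod (AlgHom.id K (Matrix (Fin n) (Fin n) D))
        (AlgHom.id K (Matrix (Fin n) (Fin n) D))).range) := by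
  set A := Matrix (Fin n) (Fin n) D
  haveI : Nonempty (Fin n) := ⟨⟨0, hn⟩⟩
  have hmem : ∀ p : A × A, p ∈ (AlgHom.prod (AlgHom.id K A) (AlgHom.id K A)).range ↔
      p.1 = p.2 := by
    rintro ⟨a, b⟩
    constructor
    · rintro ⟨x, hx⟩
      have h1 : x = a := congrArg Prod.fst hx
      have h2 : x = b := congrArg Prod.snd hx
      rw [← h1, ← h2]
    · rintro h
      exact ⟨a, Prod.ext rfl h⟩
  constructor
  · intro h
    have : ((1 : A), (0 : A)) ∈ (⊤ : Subalgebra K (A × A)) := trivial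
    rw [← h, hmem] at this
    exact one_ne_zero this
  · intro S hS
    -- S strictly contains the diagonal
    obtain ⟨⟨a, b⟩, hab, habS⟩ : ∃ p : A × A, p.1 ≠ p.2 ∧ p ∈ S := by
      obtain ⟨p, hpS, hpR⟩ := SetLike.exists_of_lt hS
      exact ⟨p, fun h => hpR ((hmem p).2 h), hpS⟩
    have hdiag : ∀ x : A, (x, x) ∈ S := fun x => hS.le ((hmem (x, x)).2 rfl)
    -- the set of x with (x,0) ∈ S is a two-sided ideal
    set I : TwoSidedIdeal A := TwoSidedIdeal.mk' {x : A | ((x, (0:A)) : A × A) ∈ S}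
      (by simp [Subalgebra.zero_mem]; exact S.zero_mem)
      (fun {x y} hx hy => by
        have := S.add_mem hx hy; simpa using this)
      (fun {x} hx => by
        have := S.neg_mem hx; simpa using this)
      (fun {x y} hy => by
        have := S.mul_mem (hdiag x) hy
        simpa using this)
      (fun {x y} hx => by
        have := S.mul_mem hx (hdiag y)
        simpa using this) with hI
    have hmemI : ∀ x : A, x ∈ I ↔ ((x, (0:A)) : A × A) ∈ S := fun x =>
      TwoSidedIdeal.mem_mk' _ _ _ _ _ _ x
    have hcI : a - b ∈ I := by
      rw [hmemI]
      have := S.add_mem habS (S.neg_mem (hdiag b))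
      simpa [Prod.ext_iff, sub_eq_add_neg] using this
    have h1 : (1 : A) ∈ I := IsSimpleRing.one_mem_of_ne_zero_mem I (sub_ne_zero.2 hab) hcI
    rw [hmemI] at h1
    -- conclude S = ⊤
    rw [eq_top_iff]
    rintro ⟨x, y⟩ -
    have hx0 : ((x, (0:A)) : A × A) ∈ S := by
      have := S.mul_mem (hdiag x) h1
      simpa using this
    have h0y : (((0:A), y) : A × A) ∈ S := by
      have := S.add_mem (hdiag y) (S.neg_mem ((by
        have := S.mul_mem (hdiag y) h1
        simpa using this : ((y, (0:A)) : A × A) ∈ S)))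
      simpa using this
    have := S.add_mem hx0 h0y
    simpa using this
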